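/- Let p be an even integer ≥ 4, 0 < a < 1, and let ω ≠ 0 be a zero of the probabilist's Hermite polynomial He_{p-1}. Then for every θ ∈ ℝ and |ρ| ≤ 1, the density f_X(x) ∝ e^{-((1-a)/a)·x²/2}·(1 + ρ·cos(ωx/√a + θ)) satisfies ∫_{-∞}^∞ sign(x - y)|x - y|^{p-1} φ(y - x) · e^{(1-a)x²/2} f_X(√a x) dx = 0 for all y ∈ ℝ. -/

import Mathlib

open MeasureTheory ProbabilityTheory Real

noncomputable section

namespace HermiteLpAux

open Polynomial Complex

lemma intA (n : ℕ) : Integrable (fun x : ℝ => x ^ n * Real.exp (-(x ^ 2) / 2)) := by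
  have h := integrable_rpow_mul_exp_neg_mul_sq (b := (1/2 : ℝ)) (by norm_num)
      (s := (n : ℝ)) (lt_of_lt_of_le (by norm_num) (Nat.cast_nonneg n))
  have e : (fun x : ℝ => x ^ n * Real.exp (-(x ^ 2) / 2))
      = fun x : ℝ => x ^ (n : ℝ) * Real.exp (-(1/2) * x ^ 2) := by
    funext x
    rw [Real.rpow_natCast]
    congr 1
    ring
  rw [e]; exact h

lemma intAbs (n : ℕ) : Integrable (fun x : ℝ => |x| ^ n * Real.exp (-(x ^ 2) / 2)) := by
  have h := (intA n).abs
  simpa [abs_mul, abs_pow, Real.abs_exp] using h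

/-- The complex kernel `x^n e^{-x²/2} e^{iwx}`. -/
def cker (n : ℕ) (w x : ℝ) : ℂ :=
  (x : ℂ) ^ n * Complex.exp (((-(x ^ 2) / 2 : ℝ) : ℂ) + ((w * x : ℝ) : ℂ) * Complex.I)

lemma norm_cker (n : ℕ) (w x : ℝ) :
    ‖cker n w x‖ = |x| ^ n * Real.exp (-(x ^ 2) / 2) := by
  unfold cker
  rw [norm_mul, norm_pow, Complex.norm_real, Real.norm_eq_abs,
    Complex.norm_exp]
  have hre : (((-(x ^ 2) / 2 : ℝ) : ℂ) + ((w * x : ℝ) : ℂ) * Complex.I).re = -(x ^ 2) / 2 := by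
    rw [Complex.add_re, Complex.ofReal_re, Complex.mul_I_re, Complex.ofReal_im]
    ring
  rw [hre]

lemma continuous_cker (n : ℕ) (w : ℝ) : Continuous (cker n w) := by
  unfold cker
  fun_prop

lemma integrable_cker (n : ℕ) (w : ℝ) : Integrable (cker n w) := by
  refine (intAbs n).mono' (continuous_cker n w).aestronglyMeasurable
    (Filter.Eventually.of_forall fun x => ?_)
  rw [norm_cker]

lemma hasDerivAt_cker (n : ℕ) (u x : ℝ) :
    HasDerivAt (fun u : ℝ => cker n u x) (Complex.I * x * cker n u x) u := by
  have h1 : HasDerivAt (fun u : ℝ => (((u * x : ℝ) : ℂ))) ((x : ℂ)) u := by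
    have h : HasDerivAt (fun u : ℝ => u * x) x u := hasDerivAt_mul_const x
    exact h.ofReal_comp
  have h2 : HasDerivAt (fun u : ℝ => (((-(x ^ 2) / 2 : ℝ) : ℂ) + ((u * x : ℝ) : ℂ) * Complex.I))
      ((x : ℂ) * Complex.I) u := (h1.mul_const Complex.I).const_add _
  have h3 := h2.cexp
  have h4 := h3.const_mul ((x : ℂ) ^ n)
  unfold cker
  exact h4.congr_deriv (by ring)

lemma hasDerivAt_integral_cker (n : ℕ) (v : ℝ) :
    HasDerivAt (fun u : ℝ => ∫ x : ℝ, cker n u x)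
      (∫ x : ℝ, Complex.I * x * cker n v x) v := by
  have h := hasDerivAt_integral_of_dominated_loc_of_deriv_le (μ := volume) (x₀ := v)
      (s := Metric.ball v 1) (Metric.ball_mem_nhds v one_pos)
      (F := fun u x => cker n u x) (F' := fun u x => Complex.I * x * cker n u x)
      (bound := fun x => |x| ^ (n + 1) * Real.exp (-(x ^ 2) / 2))
      (Filter.Eventually.of_forall fun u => (continuous_cker n u).aestronglyMeasurable)
      (integrable_cker n v)
      (by
        apply Continuous.aestronglyMeasurable
        have := continuous_cker n v
        fun_prop)
      (Filter.Eventually.of_forall fun x => by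
        intro u _
        rw [norm_mul, norm_mul, norm_cker, Complex.norm_I, one_mul, Complex.norm_real,
          Real.norm_eq_abs]
        show |x| * (|x| ^ n * Real.exp (-(x ^ 2) / 2)) ≤ |x| ^ (n + 1) * Real.exp (-(x ^ 2) / 2)
        exact le_of_eq (by ring))
      (intAbs (n + 1))
      (Filter.Eventually.of_forall fun x => fun u _ => hasDerivAt_cker n u x)
  exact h.2

lemma cker_integral (n : ℕ) : ∀ w : ℝ,
    (∫ x : ℝ, cker n w x)
      = Complex.I ^ n * ((2 * Real.pi : ℝ) : ℂ) ^ (1/2 : ℂ) *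
          (((aeval w (hermite n) : ℝ) : ℂ) * Complex.exp (((-(w ^ 2) / 2 : ℝ) : ℂ))) := by
  induction n with
  | zero =>
    intro w
    have hb : ((-(1/2) : ℂ)).re < 0 := by norm_num
    have h := integral_cexp_quadratic hb (Complex.I * w) 0
    have e1 : ∀ x : ℝ, cker 0 w x
        = Complex.exp ((-(1/2) : ℂ) * x ^ 2 + (Complex.I * w) * x + 0) := by
      intro x
      unfold cker
      rw [pow_zero, one_mul]
      congr 1
      push_cast
      ring
    rw [show (fun x : ℝ => cker 0 w x)
        = fun x : ℝ => Complex.exp ((-(1/2) : ℂ) * x ^ 2 + (Complex.I * w) * x + 0) from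
      funext e1] at *
    rw [h]
    have e2 : (↑Real.pi / -(-(1/2)) : ℂ) = ((2 * Real.pi : ℝ) : ℂ) := by
      push_cast
      ring
    have e3 : (0 - (Complex.I * w) ^ 2 / (4 * (-(1/2))) : ℂ) = ((-(w ^ 2) / 2 : ℝ) : ℂ) := by
      rw [mul_pow, Complex.I_sq]
      push_cast
      ring
    rw [e2, e3]
    simp
  | succ n ih =>
    intro w
    have hR : HasDerivAt
        (fun u : ℝ => Complex.I ^ n * ((2 * Real.pi : ℝ) : ℂ) ^ (1/2 : ℂ) *
          (((aeval u (hermite n) : ℝ) : ℂ) * Complex.exp (((-(u ^ 2) / 2 : ℝ) : ℂ))))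
        (Complex.I ^ n * ((2 * Real.pi : ℝ) : ℂ) ^ (1/2 : ℂ) *
          (((aeval w (derivative (hermite n)) : ℝ) : ℂ) * Complex.exp (((-(w ^ 2) / 2 : ℝ) : ℂ))
            + ((aeval w (hermite n) : ℝ) : ℂ) *
              (Complex.exp (((-(w ^ 2) / 2 : ℝ) : ℂ)) * ((-w : ℝ) : ℂ)))) w := by
      have hH : HasDerivAt (fun u : ℝ => ((aeval u (hermite n) : ℝ) : ℂ))
          ((aeval w (derivative (hermite n)) : ℝ) : ℂ) w :=
        ((hermite n).hasDerivAt_aeval w).ofReal_comp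
      have hg : HasDerivAt (fun u : ℝ => -(u ^ 2) / 2) (-w) w := by
        have h := ((hasDerivAt_pow 2 w).neg.div_const 2)
        exact h.congr_deriv (by norm_num; ring)
      have hE : HasDerivAt (fun u : ℝ => Complex.exp (((-(u ^ 2) / 2 : ℝ) : ℂ)))
          (Complex.exp (((-(w ^ 2) / 2 : ℝ) : ℂ)) * ((-w : ℝ) : ℂ)) w :=
        hg.ofReal_comp.cexp
      exact (hH.mul hE).const_mul _
    have hfun : (fun u : ℝ => ∫ x : ℝ, cker n u x)
        = fun u : ℝ => Complex.I ^ n * ((2 * Real.pi : ℝ) : ℂ) ^ (1/2 : ℂ) *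
            (((aeval u (hermite n) : ℝ) : ℂ) * Complex.exp (((-(u ^ 2) / 2 : ℝ) : ℂ))) :=
      funext ih
    rw [← hfun] at hR
    have hu := (hasDerivAt_integral_cker n w).unique hR
    have hmul : (∫ x : ℝ, Complex.I * x * cker n w x)
        = Complex.I * ∫ x : ℝ, cker (n + 1) w x := by
      rw [show (fun x : ℝ => Complex.I * x * cker n w x)
          = fun x : ℝ => Complex.I * cker (n + 1) w x from funext fun x => by
        unfold cker; ring]
      exact integral_const_mul _ _
    have hX : (∫ x : ℝ, cker (n + 1) w x)
        = -Complex.I * (Complex.I * ∫ x : ℝ, cker (n + 1) w x) := by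
      rw [← mul_assoc]
      simp [Complex.I_mul_I]
    rw [hX, ← hmul, hu, Polynomial.hermite_succ, map_sub, map_mul, aeval_X]
    push_cast
    ring

lemma intA_eq_zero {n : ℕ} (hn : Odd n) :
    (∫ x : ℝ, x ^ n * Real.exp (-(x ^ 2) / 2)) = 0 := by
  have h := cker_integral n 0
  have h0 : (aeval (0 : ℝ) (hermite n)) = 0 := by
    rw [aeval_def, eval₂_at_zero, Polynomial.coeff_hermite_of_odd_add (by simpa using hn),
      map_zero]
  rw [h0] at h
  simp only [Complex.ofReal_zero, zero_mul, mul_zero] at h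
  have e : (fun x : ℝ => cker n 0 x)
      = fun x : ℝ => ((x ^ n * Real.exp (-(x ^ 2) / 2) : ℝ) : ℂ) := by
    funext x
    unfold cker
    push_cast
    ring_nf
  rw [e] at h
  have hint : Integrable (fun x : ℝ => ((x ^ n * Real.exp (-(x ^ 2) / 2) : ℝ) : ℂ)) :=
    (intA n).ofReal
  have h2 := integral_re (μ := volume) hint
  simp only [RCLike.re_to_complex, Complex.ofReal_re] at h2
  rw [h, Complex.zero_re] at h2
  exact h2

lemma intB_integrable (n : ℕ) (w ψ : ℝ) :
    Integrable (fun x : ℝ => x ^ n * Real.exp (-(x ^ 2) / 2) * Real.cos (w * x + ψ)) := by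
  refine (intAbs n).mono' (Continuous.aestronglyMeasurable (by fun_prop))
    (Filter.Eventually.of_forall fun x => ?_)
  rw [Real.norm_eq_abs, abs_mul, abs_mul, _root_.abs_pow, Real.abs_exp]
  calc |x| ^ n * Real.exp (-(x ^ 2) / 2) * |Real.cos (w * x + ψ)|
      ≤ |x| ^ n * Real.exp (-(x ^ 2) / 2) * 1 := by
        apply mul_le_mul_of_nonneg_left (Real.abs_cos_le_one _) (by positivity)
    _ = |x| ^ n * Real.exp (-(x ^ 2) / 2) := mul_one _

lemma intB_eq_zero (n : ℕ) {w : ℝ} (hz : (aeval w (hermite n) : ℝ) = 0) (ψ : ℝ) :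
    (∫ x : ℝ, x ^ n * Real.exp (-(x ^ 2) / 2) * Real.cos (w * x + ψ)) = 0 := by
  have h := cker_integral n w
  rw [hz] at h
  simp only [Complex.ofReal_zero, zero_mul, mul_zero] at h
  have key : ∀ x : ℝ, x ^ n * Real.exp (-(x ^ 2) / 2) * Real.cos (w * x + ψ)
      = (Complex.exp ((ψ : ℂ) * Complex.I) * cker n w x).re := by
    intro x
    have e1 : Complex.exp ((ψ : ℂ) * Complex.I) * cker n w x
        = ((x ^ n * Real.exp (-(x ^ 2) / 2) : ℝ) : ℂ) *
            Complex.exp (((w * x + ψ : ℝ) : ℂ) * Complex.I) := by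
      unfold cker
      rw [mul_left_comm, ← Complex.exp_add]
      rw [show ((ψ : ℂ) * Complex.I + (((-(x ^ 2) / 2 : ℝ) : ℂ) + ((w * x : ℝ) : ℂ) * Complex.I))
          = ((-(x ^ 2) / 2 : ℝ) : ℂ) + ((w * x + ψ : ℝ) : ℂ) * Complex.I from by push_cast; ring]
      rw [Complex.exp_add]
      push_cast
      ring
    rw [e1, Complex.re_ofReal_mul, Complex.exp_ofReal_mul_I_re]
  rw [show (fun x : ℝ => x ^ n * Real.exp (-(x ^ 2) / 2) * Real.cos (w * x + ψ))
      = fun x : ℝ => (Complex.exp ((ψ : ℂ) * Complex.I) * cker n w x).re from funext key]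
  have hint : Integrable (fun x : ℝ => Complex.exp ((ψ : ℂ) * Complex.I) * cker n w x) :=
    (integrable_cker n w).const_mul _
  have := integral_re (μ := volume) hint
  simp only [RCLike.re_to_complex] at this
  rw [this, integral_const_mul, h, mul_zero]
  rfl

lemma sign_mul_abs_pow {n : ℕ} (hn : Odd n) (t : ℝ) :
    Real.sign t * |t| ^ n = t ^ n := by
  rcases lt_trichotomy t 0 with h | h | h
  · rw [Real.sign_of_neg h, abs_of_neg h, hn.neg_pow]
    ring
  · subst h
    simp [Real.sign_zero, zero_pow hn.pos.ne']
  · rw [Real.sign_of_pos h, abs_of_pos h, one_mul]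

end HermiteLpAux

end

open HermiteLpAux in
theorem hermite_zero_gives_linear_lp_estimator
    (p : ℕ) (hp_even : Even p) (hp4 : 4 ≤ p)
    (a : ℝ) (ha : 0 < a) (ha1 : a < 1)
    (w : ℝ) (hw : w ≠ 0)
    (hzero : Polynomial.aeval w (Polynomial.hermite (p - 1)) = 0)
    (θ ρ : ℝ) (hρ : |ρ| ≤ 1) (c : ℝ) (hc : 0 < c)
    (fX : ℝ → ℝ)
    (hfX : ∀ x, fX x = c * Real.exp (-((1 - a) / a) * x ^ 2 / 2) *
        (1 + ρ * Real.cos (w * x / Real.sqrt a + θ))) :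
    ∀ y : ℝ,
      ∫ x : ℝ,
        Real.sign (x - y) * |x - y| ^ (p - 1) * gaussianPDFReal 0 1 (y - x) *
          Real.exp ((1 - a) * x ^ 2 / 2) * fX (Real.sqrt a * x) = 0 := by
  intro y
  have h1p : 1 ≤ p := le_trans (by norm_num) hp4
  have hodd : Odd (p - 1) := Nat.Even.sub_odd h1p hp_even odd_one
  have hsq : 0 < Real.sqrt a := Real.sqrt_pos.mpr ha
  set ψ : ℝ := w * y + θ with hψ
  set K : ℝ := c * (Real.sqrt (2 * Real.pi))⁻¹ with hK
  set G : ℝ → ℝ := fun t => t ^ (p - 1) * Real.exp (-(t ^ 2) / 2) *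
      (1 + ρ * Real.cos (w * t + ψ)) with hG
  have hpt : ∀ x : ℝ,
      Real.sign (x - y) * |x - y| ^ (p - 1) * gaussianPDFReal 0 1 (y - x) *
          Real.exp ((1 - a) * x ^ 2 / 2) * fX (Real.sqrt a * x)
        = K * G (x - y) := by
    intro x
    rw [hfX, sign_mul_abs_pow hodd]
    simp only [gaussianPDFReal, NNReal.coe_one, mul_one, sub_zero]
    have e2 : w * (Real.sqrt a * x) / Real.sqrt a + θ = w * (x - y) + ψ := by
      rw [hψ]
      field_simp
      ring
    have eprod : Real.exp ((1 - a) * x ^ 2 / 2) * Real.exp (-((1 - a) * x ^ 2 / 2)) = 1 := by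
      rw [← Real.exp_add]
      simp
    rw [mul_pow, Real.sq_sqrt ha.le, e2]
    rw [show Real.exp (-((1 - a) / a) * (a * x ^ 2) / 2)
        = Real.exp (-((1 - a) * x ^ 2 / 2)) from by
      congr 1
      field_simp]
    rw [show Real.exp (-(y - x) ^ 2 / 2) = Real.exp (-((x - y) ^ 2) / 2) from by
      congr 1
      ring]
    simp only [hG, hK]
    linear_combination ((x - y) ^ (p - 1) * (Real.sqrt (2 * Real.pi))⁻¹ *
      Real.exp (-((x - y) ^ 2) / 2) * c * (1 + ρ * Real.cos (w * (x - y) + ψ))) * eprod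
  have hmain : (∫ x : ℝ,
        Real.sign (x - y) * |x - y| ^ (p - 1) * gaussianPDFReal 0 1 (y - x) *
          Real.exp ((1 - a) * x ^ 2 / 2) * fX (Real.sqrt a * x))
      = K * ∫ t : ℝ, G t := by
    rw [show (fun x : ℝ =>
        Real.sign (x - y) * |x - y| ^ (p - 1) * gaussianPDFReal 0 1 (y - x) *
          Real.exp ((1 - a) * x ^ 2 / 2) * fX (Real.sqrt a * x))
        = fun x : ℝ => K * G (x - y) from funext hpt]
    rw [MeasureTheory.integral_const_mul, integral_sub_right_eq_self G y]
  have hGzero : (∫ t : ℝ, G t) = 0 := by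
    have hGsplit : G = fun t : ℝ => (t ^ (p - 1) * Real.exp (-(t ^ 2) / 2))
        + ρ * (t ^ (p - 1) * Real.exp (-(t ^ 2) / 2) * Real.cos (w * t + ψ)) :=
      funext fun t => by simp only [hG]; ring
    rw [hGsplit,
      MeasureTheory.integral_add (intA (p - 1)) ((intB_integrable (p - 1) w ψ).const_mul ρ),
      MeasureTheory.integral_const_mul, intA_eq_zero hodd, intB_eq_zero (p - 1) hzero ψ,
      mul_zero, add_zero]
  rw [hmain, hGzero, mul_zero]
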